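/- Let p₁ ∈ M₂(ℂ) be a traceless Hermitian matrix and let q₂, p₂ ∈ M₂(ℂ) be real symmetric matrices with det q₂ = 1. Set L₁ = p₁ and L₂ = p₂ q₂⁻¹. Then det(L₁ + L₂) - det(L₁† + L₂†) = 2⟨p₁, [p₂, q₂⁻¹]⟩, where [A,B] = AB - BA. Consequently det(L₁ + L₂) is a real number if and only if p₁ has real entries or p₂ commutes with q₂. -/
import Mathlib


open Matrix

/-- The symmetric complex bilinear form on `M₂(ℂ)` obtained by polarizing the
determinant: `⟨A,B⟩ = ½(det(A+B) - det A - det B)`. -/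
noncomputable def detBilin (A B : Matrix (Fin 2) (Fin 2) ℂ) : ℂ :=
  ((A + B).det - A.det - B.det) / 2

/-- for `p₁` traceless Hermitian and `q₂, p₂` real symmetric with
`det q₂ = 1`, setting `L₁ = p₁` and `L₂ = p₂ q₂⁻¹`, one has
`det(L₁+L₂) - det(L₁†+L₂†) = 2⟨p₁, [p₂, q₂⁻¹]⟩`; consequently `det(L₁+L₂)` is real
iff `p₁` has real entries or `p₂` commutes with `q₂`. -/
theorem imaginary_part_of_total_momentum
    (p₁ q₂ p₂ : Matrix (Fin 2) (Fin 2) ℂ)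
    (hp₁herm : p₁.IsHermitian) (hp₁tr : p₁.trace = 0)
    (hq₂symm : q₂ᵀ = q₂) (hq₂real : ∀ i j, (q₂ i j).im = 0)
    (hp₂symm : p₂ᵀ = p₂) (hp₂real : ∀ i j, (p₂ i j).im = 0)
    (hq₂det : q₂.det = 1) :
    ((p₁ + p₂ * q₂⁻¹).det - (p₁ᴴ + (p₂ * q₂⁻¹)ᴴ).det
        = 2 * detBilin p₁ (p₂ * q₂⁻¹ - q₂⁻¹ * p₂))
    ∧ (((p₁ + p₂ * q₂⁻¹).det).im = 0
        ↔ (∀ i j, (p₁ i j).im = 0) ∨ p₂ * q₂ = q₂ * p₂) := by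
  -- entry facts
  have hq10 : q₂ 1 0 = q₂ 0 1 := by
    have := congrFun (congrFun hq₂symm 1) 0; simpa using this.symm
  have hp10 : p₂ 1 0 = p₂ 0 1 := by
    have := congrFun (congrFun hp₂symm 1) 0; simpa using this.symm
  have htr : p₁ 1 1 = -p₁ 0 0 := by
    have := hp₁tr; rw [Matrix.trace_fin_two] at this; linear_combination this
  have hc : p₁ 1 0 = (starRingEnd ℂ) (p₁ 0 1) := by
    have := congrFun (congrFun hp₁herm.eq 1) 0
    simpa [Matrix.conjTranspose_apply] using this.symm
  have ha : (p₁ 0 0).im = 0 := by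
    have := congrFun (congrFun hp₁herm.eq 0) 0
    simp [Matrix.conjTranspose_apply] at this
    have h2 := congrArg Complex.im this
    simp at h2
    linarith
  have hd : (p₁ 1 1).im = 0 := by rw [htr]; simpa using ha
  -- conjugate transposes
  have hq₂H : q₂ᴴ = q₂ := by
    ext i j
    simp only [Matrix.conjTranspose_apply]
    rw [show q₂ j i = q₂ i j by
      fin_cases i <;> fin_cases j <;> simp [hq10]]
    exact Complex.conj_eq_iff_im.2 (hq₂real i j)
  have hp₂H : p₂ᴴ = p₂ := by
    ext i j
    simp only [Matrix.conjTranspose_apply]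
    rw [show p₂ j i = p₂ i j by
      fin_cases i <;> fin_cases j <;> simp [hp10]]
    exact Complex.conj_eq_iff_im.2 (hp₂real i j)
  have hL₂H : (p₂ * q₂⁻¹)ᴴ = q₂⁻¹ * p₂ := by
    rw [Matrix.conjTranspose_mul, Matrix.conjTranspose_nonsing_inv, hq₂H, hp₂H]
  have hadj : q₂⁻¹ = q₂.adjugate := by rw [Matrix.inv_def, hq₂det]; simp
  have hA00 : q₂.adjugate 0 0 = q₂ 1 1 := by simp [Matrix.adjugate_fin_two]
  have hA01 : q₂.adjugate 0 1 = -q₂ 0 1 := by simp [Matrix.adjugate_fin_two]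
  have hA10 : q₂.adjugate 1 0 = -q₂ 1 0 := by simp [Matrix.adjugate_fin_two]
  have hA11 : q₂.adjugate 1 1 = q₂ 0 0 := by simp [Matrix.adjugate_fin_two]
  -- main identity
  have main : (p₁ + p₂ * q₂⁻¹).det - (p₁ᴴ + (p₂ * q₂⁻¹)ᴴ).det
      = 2 * detBilin p₁ (p₂ * q₂⁻¹ - q₂⁻¹ * p₂) := by
    rw [hp₁herm.eq, hL₂H, hadj]
    simp only [detBilin, Matrix.det_fin_two, Matrix.add_apply, Matrix.sub_apply,
      Matrix.mul_apply, Fin.sum_univ_two, hA00, hA01, hA10, hA11]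
    rw [htr]; ring
  refine ⟨main, ?_⟩
  -- factorization
  have hfact : 2 * detBilin p₁ (p₂ * q₂⁻¹ - q₂⁻¹ * p₂)
      = ((p₂ * q₂) 0 1 - (q₂ * p₂) 0 1) * (p₁ 1 0 - p₁ 0 1) := by
    rw [hadj]
    simp only [detBilin, Matrix.det_fin_two, Matrix.add_apply, Matrix.sub_apply,
      Matrix.mul_apply, Fin.sum_univ_two, hA00, hA01, hA10, hA11]
    rw [htr, hq10, hp10]; ring
  have hstar : (p₁ᴴ + (p₂ * q₂⁻¹)ᴴ).det = (starRingEnd ℂ) (p₁ + p₂ * q₂⁻¹).det := by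
    rw [← Matrix.conjTranspose_add, Matrix.det_conjTranspose]; rfl
  rw [hstar] at main
  constructor
  · intro him
    have h0 : ((p₂ * q₂) 0 1 - (q₂ * p₂) 0 1) * (p₁ 1 0 - p₁ 0 1) = 0 := by
      rw [← hfact, ← main, sub_eq_zero, eq_comm]
      exact Complex.conj_eq_iff_im.2 him
    rcases mul_eq_zero.1 h0 with h | h
    · right
      rw [sub_eq_zero] at h
      simp only [Matrix.mul_apply, Fin.sum_univ_two] at h
      ext i j
      fin_cases i <;> fin_cases j <;>
        simp only [Matrix.mul_apply, Fin.sum_univ_two, hq10, hp10,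
          Fin.zero_eta, Fin.mk_one, Fin.isValue]
      · ring
      · linear_combination h
      · linear_combination -h
      · ring
    · left
      have hb : (p₁ 0 1).im = 0 := by
        rw [sub_eq_zero] at h
        have : (starRingEnd ℂ) (p₁ 0 1) = p₁ 0 1 := by rw [← hc, h]
        exact Complex.conj_eq_iff_im.1 this
      intro i j
      fin_cases i <;> fin_cases j
      · exact ha
      · exact hb
      · show (p₁ 1 0).im = 0
        rw [hc]; simpa using hb
      · exact hd
  · intro hcase
    have h0 : ((p₂ * q₂) 0 1 - (q₂ * p₂) 0 1) * (p₁ 1 0 - p₁ 0 1) = 0 := by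
      rcases hcase with hreal | hcomm
      · have hb : p₁ 1 0 = p₁ 0 1 := by rw [hc, Complex.conj_eq_iff_im.2 (hreal 0 1)]
        rw [hb]; ring
      · rw [hcomm]; ring
    have h1 : (p₁ + p₂ * q₂⁻¹).det - (starRingEnd ℂ) (p₁ + p₂ * q₂⁻¹).det = 0 := by
      rw [main, hfact, h0]
    exact Complex.conj_eq_iff_im.1 (sub_eq_zero.1 h1).symm
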